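/- Let R be a commutative ring, x an indeterminate, and let A = R[x]/(q(x)) where q(x) = T_N(x) − c for some c ∈ R and N odd (T_N the normalized Chebyshev polynomial). Then A is a free R-module of rank N with basis 1, x, …, x^{N−1}, and for the R-linear map L_{T_k(x)} : A → A given by multiplication by T_k(x) with 0 ≤ k < N, the trace of L_{T_k(x)} is 0 unless k = 0, in which case it is 2N. -/

import Mathlib

open Polynomial

/-- The normalized Chebyshev polynomials of the first kind:
`T 0 = 2`, `T 1 = X`, `T (n+2) = X * T (n+1) - T n`. -/
noncomputable def Tc (R : Type*) [CommRing R] : ℕ → Polynomial R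
  | 0 => 2
  | 1 => Polynomial.X
  | n + 2 => Polynomial.X * Tc R (n + 1) - Tc R n

section Aux

variable {R : Type*} [CommRing R]

lemma Tc_zero : Tc R 0 = 2 := rfl
lemma Tc_one : Tc R 1 = X := rfl
lemma Tc_add_two (n : ℕ) : Tc R (n + 2) = X * Tc R (n + 1) - Tc R n := rfl

lemma Tc_deg [Nontrivial R] : ∀ n : ℕ, 1 ≤ n → (Tc R n).Monic ∧ (Tc R n).natDegree = n := by
  intro n
  induction n using Nat.strong_induction_on with
  | _ n ih =>
    match n with
    | 0 => intro h; omega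
    | 1 => intro _; exact ⟨monic_X, natDegree_X⟩
    | (n + 2) =>
      intro _
      have h1 := ih (n + 1) (by omega) (by omega)
      have h0 : (Tc R n).natDegree ≤ n := by
        match n with
        | 0 => simp [Tc_zero]
        | (m + 1) => exact le_of_eq (ih (m + 1) (by omega) (by omega)).2
      have hm1 : (X * Tc R (n + 1)).Monic := monic_X.mul h1.1
      have hd1 : (X * Tc R (n + 1)).natDegree = n + 2 := by
        rw [natDegree_X_mul h1.1.ne_zero, h1.2]
      have hdeglt : (-(Tc R n)).degree < (X * Tc R (n + 1)).degree := by
        rw [degree_neg, degree_eq_natDegree hm1.ne_zero, hd1]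
        calc (Tc R n).degree ≤ ((Tc R n).natDegree : WithBot ℕ) := degree_le_natDegree
          _ < ((n + 2 : ℕ) : WithBot ℕ) := by
              exact_mod_cast show (Tc R n).natDegree < n + 2 by omega
      constructor
      · rw [Tc_add_two, sub_eq_add_neg]
        exact hm1.add_of_left hdeglt
      · rw [Tc_add_two, sub_eq_add_neg,
          natDegree_eq_of_degree_eq (degree_add_eq_left_of_degree_lt hdeglt), hd1]

lemma Tc_natDegree_le [Nontrivial R] (n : ℕ) : (Tc R n).natDegree ≤ n := by
  match n with
  | 0 => simp [Tc_zero]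
  | (m + 1) => exact le_of_eq (Tc_deg (m + 1) (by omega)).2

lemma Tc_mul_X (m : ℕ) (hm : 1 ≤ m) :
    Tc R m * X = Tc R (m + 1) + Tc R (m - 1) := by
  match m with
  | (m' + 1) =>
    have : Tc R (m' + 2) = X * Tc R (m' + 1) - Tc R m' := Tc_add_two m'
    simp only [Nat.add_sub_cancel]
    rw [show m' + 1 + 1 = m' + 2 from rfl, this]
    ring

lemma Tc_mul : ∀ n m : ℕ, n ≤ m → Tc R m * Tc R n = Tc R (m + n) + Tc R (m - n) := by
  intro n
  induction n using Nat.strong_induction_on with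
  | _ n ih =>
    match n with
    | 0 => intro m _; rw [Tc_zero]; simp [mul_two]
    | 1 => intro m hm; rw [Tc_one]; exact Tc_mul_X m hm
    | (n + 2) =>
      intro m hm
      obtain ⟨a, rfl⟩ : ∃ a, m = a + (n + 2) := ⟨m - (n + 2), by omega⟩
      have h1 := ih (n + 1) (by omega) (a + (n + 2)) (by omega)
      have h0 := ih n (by omega) (a + (n + 2)) (by omega)
      rw [show a + (n + 2) - (n + 1) = a + 1 from by omega] at h1
      rw [show a + (n + 2) - n = a + 2 from by omega] at h0
      have hx1 := Tc_mul_X (R := R) (a + (n + 2) + (n + 1)) (by omega)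
      rw [show a + (n + 2) + (n + 1) - 1 = a + (n + 2) + n from by omega,
        show a + (n + 2) + (n + 1) + 1 = a + (n + 2) + (n + 2) from by omega] at hx1
      have hx2 := Tc_mul_X (R := R) (a + 1) (by omega)
      rw [show a + 1 - 1 = a from by omega, show a + 1 + 1 = a + 2 from by omega] at hx2
      rw [show a + (n + 2) - (n + 2) = a from by omega, Tc_add_two]
      calc Tc R (a + (n + 2)) * (X * Tc R (n + 1) - Tc R n)
          = (Tc R (a + (n + 2)) * Tc R (n + 1)) * X - Tc R (a + (n + 2)) * Tc R n := by ring
        _ = (Tc R (a + (n + 2) + (n + 1)) + Tc R (a + 1)) * X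
              - (Tc R (a + (n + 2) + n) + Tc R (a + 2)) := by rw [h1, h0]
        _ = Tc R (a + (n + 2) + (n + 1)) * X + Tc R (a + 1) * X
              - Tc R (a + (n + 2) + n) - Tc R (a + 2) := by ring
        _ = Tc R (a + (n + 2) + (n + 2)) + Tc R a := by rw [hx1, hx2]; ring

end Aux

/-- For `A = R[x]/(T_N(x) - c)` with `2` invertible in `R` and `N ≥ 3` odd, `A` is free of
rank `N` with basis `1, x, …, x^(N-1)`, and the trace of multiplication by `T_k(x)` for
`0 ≤ k < N` is `0` unless `k = 0`, in which case it is `2N`. -/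
theorem annulus_trace (R : Type*) [CommRing R] (h2 : IsUnit (2 : R))
    (N : ℕ) (hN : 3 ≤ N) (hodd : Odd N) (c : R) :
    (∃ b : Module.Basis (Fin N) R (AdjoinRoot (Tc R N - Polynomial.C c)),
      ∀ i : Fin N, b i = AdjoinRoot.root (Tc R N - Polynomial.C c) ^ (i : ℕ)) ∧
    (∀ k : ℕ, k < N →
      LinearMap.trace R (AdjoinRoot (Tc R N - Polynomial.C c))
          (LinearMap.mulLeft R (AdjoinRoot.mk (Tc R N - Polynomial.C c) (Tc R k))) =
        if k = 0 then (2 * N : R) else 0) := by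
  rcases subsingleton_or_nontrivial R with hR | hR
  · haveI : Subsingleton (AdjoinRoot (Tc R N - Polynomial.C c)) := Module.subsingleton R _
    refine ⟨⟨Module.Basis.ofRepr ?_, fun i => Subsingleton.elim _ _⟩, fun k _ => Subsingleton.elim _ _⟩
    exact
      { toFun := fun _ => 0
        invFun := fun _ => 0
        map_add' := fun _ _ => Subsingleton.elim _ _
        map_smul' := fun _ _ => Subsingleton.elim _ _
        left_inv := fun _ => Subsingleton.elim _ _
        right_inv := fun _ => Subsingleton.elim _ _ }
  · set q : Polynomial R := Tc R N - Polynomial.C c with hqdef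
    have hTN := Tc_deg (R := R) N (by omega)
    have hdeglt : (-(Polynomial.C c)).degree < (Tc R N).degree := by
      rw [degree_neg, degree_eq_natDegree hTN.1.ne_zero, hTN.2]
      exact degree_C_le.trans_lt (by exact_mod_cast show (0:ℕ) < N by omega)
    have hqm : q.Monic := by
      rw [hqdef, sub_eq_add_neg]
      exact hTN.1.add_of_left hdeglt
    have hqd : q.natDegree = N := by
      rw [hqdef, sub_eq_add_neg,
        natDegree_eq_of_degree_eq (degree_add_eq_left_of_degree_lt hdeglt), hTN.2]
    haveI : NeZero N := ⟨by omega⟩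
    classical
    set pb := AdjoinRoot.powerBasis' hqm with hpb
    have hdim : pb.dim = N := by rw [hpb, AdjoinRoot.powerBasis'_dim, hqd]
    set b0 : Module.Basis (Fin N) R (AdjoinRoot q) := pb.basis.reindex (finCongr hdim) with hb0def
    have hb0 : ∀ i : Fin N, b0 i = AdjoinRoot.root q ^ (i : ℕ) := by
      intro i
      rw [hb0def, Module.Basis.reindex_apply, pb.basis_eq_pow]
      simp [hpb]
    refine ⟨⟨b0, hb0⟩, ?_⟩
    set P : Matrix (Fin N) (Fin N) R := fun i j => (Tc R (j : ℕ)).coeff (i : ℕ) with hPdef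
    have hPtri : P.BlockTriangular id := by
      intro i j hij
      exact coeff_eq_zero_of_natDegree_lt (lt_of_le_of_lt (Tc_natDegree_le _) hij)
    have hPdiag : ∀ j : Fin N, P j j = if j = 0 then 2 else 1 := by
      intro j
      rcases eq_or_ne j 0 with rfl | hj
      · simp [hPdef, Tc_zero]
      · have hj1 : 1 ≤ (j : ℕ) := by
          rcases Nat.eq_zero_or_pos (j : ℕ) with h | h
          · exact absurd (Fin.ext (by simp [h])) hj
          · exact h
        have h := Tc_deg (R := R) (j : ℕ) hj1
        rw [if_neg hj]
        have hc := h.1.coeff_natDegree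
        rw [h.2] at hc
        simpa [hPdef] using hc
    have hPdet : IsUnit P.det := by
      rw [Matrix.det_of_upperTriangular hPtri]
      have : ∏ j, P j j = 2 := by
        rw [Finset.prod_congr rfl fun j _ => hPdiag j]
        simp
      rw [this]; exact h2
    haveI := P.invertibleOfIsUnitDet hPdet
    set ε := Matrix.toLinOfInv b0 b0 (mul_invOf_self P) (invOf_mul_self P) with hε
    set t := b0.map ε with htdef
    set E : ℕ → AdjoinRoot q := fun m => AdjoinRoot.mk q (Tc R m) with hEdef
    have ht : ∀ j : Fin N, t j = E (j : ℕ) := by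
      intro j
      rw [htdef, Module.Basis.map_apply]
      have h1 : ε (b0 j) = ∑ i, P i j • b0 i := Matrix.toLin_self b0 b0 P j
      have h2' : E (j : ℕ) = ∑ i : Fin N, (Tc R (j : ℕ)).coeff (i : ℕ) • AdjoinRoot.root q ^ (i : ℕ) := by
        rw [hEdef]
        simp only
        rw [← AdjoinRoot.aeval_eq,
          Polynomial.aeval_eq_sum_range' (lt_of_le_of_lt (Tc_natDegree_le _) j.isLt),
          ← Fin.sum_univ_eq_sum_range]
      rw [h1, h2']
      exact Finset.sum_congr rfl fun i _ => by rw [hb0 i]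
    have hmul : ∀ m n : ℕ, n ≤ m → E m * E n = E (m + n) + E (m - n) := by
      intro m n h
      simp only [hEdef]
      rw [← map_mul, ← map_add, Tc_mul n m h]
    have hEN : E N = algebraMap R (AdjoinRoot q) c := by
      have h0 : AdjoinRoot.mk q q = 0 := AdjoinRoot.mk_self
      have h1 : AdjoinRoot.mk q (Tc R N) - AdjoinRoot.mk q (Polynomial.C c) = 0 := by
        rw [← map_sub]; exact h0
      have h2' : AdjoinRoot.mk q (Tc R N) = AdjoinRoot.mk q (Polynomial.C c) :=
        sub_eq_zero.mp h1
      rw [hEdef]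
      simp only
      rw [h2', AdjoinRoot.algebraMap_eq]
      rfl
    have hred : ∀ r : ℕ, r ≤ N → E (N + r) = c • E r - E (N - r) := by
      intro r hr
      have h := hmul N r hr
      have h' : E (N + r) + E (N - r) = c • E r := by
        rw [← h, hEN, Algebra.smul_def]
      exact eq_sub_of_add_eq h'
    have hrepr : ∀ (m : ℕ) (hm : m < N) (i : Fin N),
        t.repr (E m) i = if m = (i : ℕ) then 1 else 0 := by
      intro m hm i
      rw [show E m = t ⟨m, hm⟩ from (ht ⟨m, hm⟩).symm, t.repr_self,
        Finsupp.single_apply]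
      simp [Fin.ext_iff]
    intro k hk
    have htr : LinearMap.trace R (AdjoinRoot q)
        (LinearMap.mulLeft R (AdjoinRoot.mk q (Tc R k)))
        = ∑ j : Fin N, t.repr (E k * t j) j := by
      rw [LinearMap.trace_eq_matrix_trace R t, Matrix.trace]
      refine Finset.sum_congr rfl fun j _ => ?_
      rw [Matrix.diag_apply, LinearMap.toMatrix_apply, LinearMap.mulLeft_apply]
    by_cases hk0 : k = 0
    · subst hk0
      rw [if_pos rfl, htr]
      have hE0 : E 0 = (2 : AdjoinRoot q) := by
        rw [hEdef]; simp only [Tc_zero]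
        exact map_ofNat _ 2
      have hterm : ∀ j : Fin N, t.repr (E 0 * t j) j = 2 := by
        intro j
        have hsm : E 0 * t j = (2 : R) • t j := by
          rw [hE0, Algebra.smul_def, map_ofNat]
        rw [hsm, map_smul, Finsupp.smul_apply, t.repr_self]
        simp
      rw [Finset.sum_congr rfl fun j _ => hterm j, Finset.sum_const, Finset.card_univ,
        Fintype.card_fin, nsmul_eq_mul]
      ring
    · rw [if_neg hk0]
      have hk1 : 1 ≤ k := by omega
      have key : ∀ j : Fin N, t.repr (E k * t j) j
          = (if k = 2 * (j : ℕ) then (1 : R) else 0)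
            - (if k + 2 * (j : ℕ) = 2 * N then (1 : R) else 0) := by
        intro j
        have hjN : (j : ℕ) < N := j.isLt
        have claim1 : t.repr (E (k + (j : ℕ))) j
            = - (if k + 2 * (j : ℕ) = 2 * N then (1 : R) else 0) := by
          rcases lt_trichotomy (k + (j : ℕ)) N with hlt | heq | hgt
          · rw [hrepr _ hlt, if_neg (show ¬(k + (j : ℕ) = (j : ℕ)) by omega),
              if_neg (show ¬(k + 2 * (j : ℕ) = 2 * N) by omega), neg_zero]
          · have hE0 : E 0 = (2 : R) • (1 : AdjoinRoot q) := by
              rw [Algebra.smul_def, mul_one, map_ofNat, hEdef]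
              simp only [Tc_zero]
              exact map_ofNat _ 2
            have hEN' : E (k + (j : ℕ)) = (c * ↑h2.unit⁻¹) • E 0 := by
              rw [heq, hEN, hE0, smul_smul, mul_assoc, IsUnit.val_inv_mul, mul_one,
                Algebra.algebraMap_eq_smul_one]
            rw [hEN', map_smul, Finsupp.smul_apply, hrepr 0 (by omega) j,
              if_neg (show ¬((0 : ℕ) = (j : ℕ)) by omega),
              if_neg (show ¬(k + 2 * (j : ℕ) = 2 * N) by omega)]
            simp
          · have hrceq : k + (j : ℕ) = N + (k + (j : ℕ) - N) := by omega
            rw [hrceq, hred (k + (j : ℕ) - N) (by omega), map_sub, map_smul,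
              Finsupp.sub_apply, Finsupp.smul_apply,
              hrepr (k + (j : ℕ) - N) (by omega) j,
              hrepr (N - (k + (j : ℕ) - N)) (by omega) j,
              if_neg (show ¬(k + (j : ℕ) - N = (j : ℕ)) by omega)]
            by_cases hc : k + 2 * (j : ℕ) = 2 * N
            · rw [if_pos (show N - (k + (j : ℕ) - N) = (j : ℕ) by omega), if_pos hc]; simp
            · rw [if_neg (show ¬(N - (k + (j : ℕ) - N) = (j : ℕ)) by omega), if_neg hc]; simp
        rcases le_total (j : ℕ) k with hle | hle
        · rw [ht j, hmul k (j : ℕ) hle, map_add, Finsupp.add_apply, claim1,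
            hrepr (k - (j : ℕ)) (by omega) j]
          by_cases hc : k = 2 * (j : ℕ)
          · rw [if_pos (show k - (j : ℕ) = (j : ℕ) by omega), if_pos hc]; ring
          · rw [if_neg (show ¬(k - (j : ℕ) = (j : ℕ)) by omega), if_neg hc]; ring
        · rw [ht j, mul_comm, hmul (j : ℕ) k hle,
            show (j : ℕ) + k = k + (j : ℕ) from by omega,
            map_add, Finsupp.add_apply, claim1, hrepr ((j : ℕ) - k) (by omega) j,
            if_neg (show ¬((j : ℕ) - k = (j : ℕ)) by omega),
            if_neg (show ¬(k = 2 * (j : ℕ)) by omega)]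
          ring
      rw [htr, Finset.sum_congr rfl fun j _ => key j, Finset.sum_sub_distrib]
      by_cases hpar : 2 ∣ k
      · obtain ⟨m, rfl⟩ := hpar
        have hm1 : 1 ≤ m := by omega
        have hmN : m < N := by omega
        have hNm : N - m < N := by omega
        have e1 : ∑ j : Fin N, (if 2 * m = 2 * (j : ℕ) then (1 : R) else 0) = 1 := by
          rw [Finset.sum_eq_single_of_mem (⟨m, hmN⟩ : Fin N) (Finset.mem_univ _)
            (fun b _ hb => if_neg fun hcon => hb (Fin.ext (show (b : ℕ) = m by omega)))]
          exact if_pos rfl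
        have e2 : ∑ j : Fin N, (if 2 * m + 2 * (j : ℕ) = 2 * N then (1 : R) else 0) = 1 := by
          rw [Finset.sum_eq_single_of_mem (⟨N - m, hNm⟩ : Fin N) (Finset.mem_univ _)
            (fun b _ hb => if_neg fun hcon => hb (Fin.ext (show (b : ℕ) = N - m by omega)))]
          exact if_pos (by show 2 * m + 2 * (N - m) = 2 * N; omega)
        rw [e1, e2, sub_self]
      · have e1 : ∑ j : Fin N, (if k = 2 * (j : ℕ) then (1 : R) else 0) = 0 :=
          Finset.sum_eq_zero fun j _ => if_neg (by omega)
        have e2 : ∑ j : Fin N, (if k + 2 * (j : ℕ) = 2 * N then (1 : R) else 0) = 0 :=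
          Finset.sum_eq_zero fun j _ => if_neg (by omega)
        rw [e1, e2, sub_self]
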